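/- If f : ℝ → ℝ satisfies f(x+y) = f(x)f(y) - αxy for all real x, y with α ≠ 0, and f has a zero, then α > 0 and either f(x) = 1 - √α·x for all x, or f(x) = 1 + √α·x for all x. -/

import Mathlib

theorem stmt_0 (α : ℝ) (hα : α ≠ 0) (f : ℝ → ℝ)
    (hf : ∀ x y : ℝ, f (x + y) = f x * f y - α * x * y)
    (hz : ∃ x₀ : ℝ, f x₀ = 0) :
    0 < α ∧ ((∀ x : ℝ, f x = 1 - Real.sqrt α * x) ∨ (∀ x : ℝ, f x = 1 + Real.sqrt α * x)) := by
  obtain ⟨x₀, h0⟩ := hz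
  have hx0 : x₀ ≠ 0 := by
    intro h; subst h
    have hfx : ∀ x, f x = 0 := by
      intro x
      have h := hf x 0
      simpa [h0] using h
    have h1 := hf 1 1
    simp only [hfx] at h1
    exact hα (by linarith)
  have hform : ∀ x, f x = α * x₀ * (x₀ - x) := by
    intro x
    have h := hf x₀ (x - x₀)
    rw [show x₀ + (x - x₀) = x by ring, h0] at h
    rw [h]; ring
  have hf0 : f 0 = f 0 * f 0 := by
    have h := hf 0 0
    simpa using h
  have hf0v : f 0 = α * x₀ * x₀ := by rw [hform 0]; ring
  have hne : f 0 ≠ 0 := by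
    rw [hf0v]; exact mul_ne_zero (mul_ne_zero hα hx0) hx0
  have hf01 : f 0 = 1 := by
    have := hf0
    field_simp at this
    exact this.symm
  have hαx : α * x₀ * x₀ = 1 := by rw [← hf0v, hf01]
  have hαpos : 0 < α := by nlinarith [sq_nonneg x₀, mul_self_nonneg x₀]
  have hαval : α = (1 / x₀)^2 := by field_simp; nlinarith
  refine ⟨hαpos, ?_⟩
  rcases lt_or_gt_of_ne hx0 with hneg | hpos
  · right
    intro x
    have hs : Real.sqrt α = -(1 / x₀) := by
      rw [hαval, show (1/x₀)^2 = (-(1/x₀))^2 by ring, Real.sqrt_sq (neg_nonneg.mpr (one_div_neg.mpr hneg).le)]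
    rw [hform x, hs]
    field_simp
    linear_combination (x₀ - x) * hαx
  · left
    intro x
    have hs : Real.sqrt α = 1 / x₀ := by
      rw [hαval, Real.sqrt_sq (by positivity)]
    rw [hform x, hs]
    field_simp
    linear_combination (x₀ - x) * hαx
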